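/- Fix a ≥ 0, b ≥ 0, and let f : ℝ² → ℝ be measurable with 0 ≤ f(k) ≤ 1 for all k, not almost everywhere equal to 0, and such that k ↦ ε(k)·f(k) is integrable over ℝ². Then the map μ ↦ ∫_{ℝ²} λ(ε(k), exp(−μ/k_BT); a, b; f(k)) dk is strictly increasing on ℝ. -/

import Mathlib

/-- `ψ(ε,ξ;a,b) = (a+1)(ε+b)/(1 + ξ·e^{(ε+b)/k_BT}) + a[ε−b]₊/(1 + ξ·e^{[ε−b]₊/k_BT})`. -/
noncomputable def psi (kBT ε ξ a b : ℝ) : ℝ :=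
  (a + 1) * (ε + b) / (1 + ξ * Real.exp ((ε + b) / kBT)) +
    a * max (ε - b) 0 / (1 + ξ * Real.exp (max (ε - b) 0 / kBT))

/-- `λ(ε,ξ;a,b;φ) = ψ(ε,ξ;a,b)·(1 − φ·(1 + ξ·e^{ε/k_BT}))`. -/
noncomputable def lam (kBT ε ξ a b φ : ℝ) : ℝ :=
  psi kBT ε ξ a b * (1 - φ * (1 + ξ * Real.exp (ε / kBT)))


open MeasureTheory

/-- Strict monotonicity in `ξ` of the building-block ratio. -/
lemma ratio_lt {φ ξ₁ ξ₂ E B : ℝ} (hφ0 : 0 ≤ φ) (hφ1 : φ ≤ 1) (hE : 0 < E) (hB : 0 < B)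
    (hξ2 : 0 < ξ₂) (hlt : ξ₂ < ξ₁) :
    (1 - φ * (1 + ξ₁ * E)) / (1 + ξ₁ * B) < (1 - φ * (1 + ξ₂ * E)) / (1 + ξ₂ * B) := by
  have hξ1 : 0 < ξ₁ := hξ2.trans hlt
  have hd1 : 0 < 1 + ξ₁ * B := by positivity
  have hd2 : 0 < 1 + ξ₂ * B := by positivity
  rw [div_lt_div_iff₀ hd1 hd2]
  have hpos : 0 < (1 - φ) * B + φ * E := by
    rcases eq_or_lt_of_le hφ1 with h | h
    · simp [h]; linarith
    · have h1 : 0 < (1 - φ) * B := by nlinarith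
      nlinarith [mul_nonneg hφ0 hE.le]
  nlinarith [mul_pos (sub_pos.mpr hlt) hpos]

lemma lam_eq (T ε ξ a b φ : ℝ) :
    lam T ε ξ a b φ =
      (a + 1) * (ε + b) * ((1 - φ * (1 + ξ * Real.exp (ε / T))) / (1 + ξ * Real.exp ((ε + b) / T)))
        + a * max (ε - b) 0 *
          ((1 - φ * (1 + ξ * Real.exp (ε / T))) / (1 + ξ * Real.exp (max (ε - b) 0 / T))) := by
  unfold lam psi; ring

/-- Strict pointwise monotonicity of `lam` in `ξ` (for `ε + b > 0`). -/
lemma lam_lt {T ε ξ₁ ξ₂ a b φ : ℝ} (hT : 0 < T) (ha : 0 ≤ a) (hεb : 0 < ε + b)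
    (hε : 0 ≤ ε) (hb : 0 ≤ b) (hφ0 : 0 ≤ φ) (hφ1 : φ ≤ 1) (hξ2 : 0 < ξ₂) (hlt : ξ₂ < ξ₁) :
    lam T ε ξ₁ a b φ < lam T ε ξ₂ a b φ := by
  rw [lam_eq, lam_eq]
  have hE : 0 < Real.exp (ε / T) := Real.exp_pos _
  have h1 := ratio_lt (E := Real.exp (ε / T)) (B := Real.exp ((ε + b) / T))
    hφ0 hφ1 hE (Real.exp_pos _) hξ2 hlt
  have h2 := ratio_lt (E := Real.exp (ε / T)) (B := Real.exp (max (ε - b) 0 / T))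
    hφ0 hφ1 hE (Real.exp_pos _) hξ2 hlt
  have hc1 : 0 < (a + 1) * (ε + b) := by positivity
  have hc2 : 0 ≤ a * max (ε - b) 0 := mul_nonneg ha (le_max_right _ _)
  exact add_lt_add_of_lt_of_le ((mul_lt_mul_iff_right₀ hc1).mpr h1)
    (mul_le_mul_of_nonneg_left h2.le hc2)

/-- Weak pointwise monotonicity of `lam` in `ξ`. -/
lemma lam_le {T ε ξ₁ ξ₂ a b φ : ℝ} (hT : 0 < T) (ha : 0 ≤ a)
    (hε : 0 ≤ ε) (hb : 0 ≤ b) (hφ0 : 0 ≤ φ) (hφ1 : φ ≤ 1) (hξ2 : 0 < ξ₂) (hlt : ξ₂ ≤ ξ₁) :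
    lam T ε ξ₁ a b φ ≤ lam T ε ξ₂ a b φ := by
  rcases eq_or_lt_of_le hlt with h | h
  · rw [h]
  rcases eq_or_lt_of_le (by positivity : (0:ℝ) ≤ ε + b) with h0 | h0
  · rw [lam_eq, lam_eq, ← h0]
    have hm : max (ε - b) 0 = 0 := by
      rw [max_eq_right]; nlinarith
    simp [hm]
  · exact (lam_lt hT ha h0 hε hb hφ0 hφ1 hξ2 h).le
set_option maxHeartbeats 1000000 in
lemma lam_bound {T ξ a b ε φ : ℝ} (hT : 0 < T) (hξ : 0 < ξ) (ha : 0 ≤ a) (hb : 0 ≤ b)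
    (hε : 0 ≤ ε) (hφ0 : 0 ≤ φ) (hφ1 : φ ≤ 1) :
    |lam T ε ξ a b φ| ≤
      (1/ξ) * ((a+1) * (1 + Real.exp (2*b/T))) * ((ε+b) * Real.exp (-((ε+b)/T)))
      + ((a+1) * (1 + Real.exp (b/T))) * (ε*φ) + ((a+1)*b) * φ := by
  have hm0 : (0:ℝ) ≤ max (ε - b) 0 := le_max_right _ _
  set m := max (ε - b) 0 with hmdef
  have hmε : m ≤ ε := max_le (by linarith) hε
  set E := Real.exp (ε/T) with hEdef
  set B := Real.exp ((ε+b)/T) with hBdef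
  set M := Real.exp (m/T) with hMdef
  have hE : 0 < E := Real.exp_pos _
  have hB : 0 < B := Real.exp_pos _
  have hM : 0 < M := Real.exp_pos _
  have hEB : E ≤ B := Real.exp_le_exp.mpr ((div_le_div_iff_of_pos_right hT).mpr (by linarith))
  have hd1 : 0 < 1 + ξ*B := by positivity
  have hd2 : 0 < 1 + ξ*M := by positivity
  have hNabs : |1 - φ*(1+ξ*E)| ≤ (1-φ) + φ*(ξ*E) := by
    have h1 : 0 ≤ φ*(ξ*E) := by positivity
    rw [abs_le]; constructor <;> nlinarith
  have hlam : |lam T ε ξ a b φ| ≤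
      (a+1)*(ε+b) * (|1 - φ*(1+ξ*E)| / (1+ξ*B)) + a*m * (|1 - φ*(1+ξ*E)| / (1+ξ*M)) := by
    rw [lam_eq]
    rw [show Real.exp (ε/T) = E from rfl, show Real.exp ((ε+b)/T) = B from rfl,
      show max (ε-b) 0 = m from rfl, show Real.exp (m/T) = M from rfl]
    refine (abs_add_le _ _).trans (le_of_eq ?_)
    simp only [abs_mul, abs_div]
    rw [abs_of_pos hd1, abs_of_pos hd2,
      abs_of_nonneg (by linarith : (0:ℝ) ≤ a+1), abs_of_nonneg (by linarith : (0:ℝ) ≤ ε+b),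
      abs_of_nonneg ha, abs_of_nonneg hm0]
  have key1 : |1 - φ*(1+ξ*E)| / (1+ξ*B) ≤ (1/ξ) * (1/B) + φ := by
    calc |1 - φ*(1+ξ*E)| / (1+ξ*B) ≤ ((1-φ) + φ*(ξ*E)) / (1+ξ*B) := by
          gcongr
        _ = (1-φ)/(1+ξ*B) + φ*(ξ*E)/(1+ξ*B) := by ring
        _ ≤ (1/ξ) * (1/B) + φ := by
          apply add_le_add
          · have : (1-φ)/(1+ξ*B) ≤ 1/(ξ*B) :=
              div_le_div₀ zero_le_one (by linarith) (by positivity) (by linarith)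
            calc (1-φ)/(1+ξ*B) ≤ 1/(ξ*B) := this
              _ = (1/ξ)*(1/B) := by rw [one_div_mul_eq_div]; ring_nf
          · rw [div_le_iff₀ hd1]
            nlinarith [mul_le_mul_of_nonneg_left (by nlinarith : ξ*E ≤ 1+ξ*B) hφ0]
  have key2 : a*m * (|1 - φ*(1+ξ*E)| / (1+ξ*M)) ≤
      (1/ξ) * (a * Real.exp (2*b/T)) * ((ε+b) * Real.exp (-((ε+b)/T)))
        + (a * Real.exp (b/T)) * (ε*φ) := by
    rcases eq_or_lt_of_le hm0 with h0 | h0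
    · rw [← h0]
      have h1 : (0:ℝ) ≤ (ε+b) * Real.exp (-((ε+b)/T)) := by positivity
      have h2 : (0:ℝ) ≤ ε*φ := by positivity
      simp only [mul_zero, zero_mul]
      positivity
    · have hεb : 0 < ε - b := by
        by_contra h; push_neg at h
        rw [hmdef, max_eq_right h] at h0; exact lt_irrefl 0 h0
      have hmeq : m = ε - b := max_eq_left hεb.le
      have hMexp : Real.exp (-(m/T)) = Real.exp (2*b/T) * Real.exp (-((ε+b)/T)) := by
        rw [← Real.exp_add]; congr 1; rw [hmeq]; ring
      have hEM : E = M * Real.exp (b/T) := by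
        rw [hEdef, hMdef, ← Real.exp_add]; congr 1; rw [hmeq]; ring
      calc a*m * (|1 - φ*(1+ξ*E)| / (1+ξ*M))
          ≤ a*m * (((1-φ) + φ*(ξ*E)) / (1+ξ*M)) := by
            gcongr
        _ = a*m*((1-φ)/(1+ξ*M)) + a*m*φ*((ξ*E)/(1+ξ*M)) := by ring
        _ ≤ a*m*(1/(ξ*M)) + a*m*φ*(Real.exp (b/T)) := by
            apply add_le_add
            · apply mul_le_mul_of_nonneg_left _ (by positivity)
              exact div_le_div₀ zero_le_one (by linarith) (by positivity) (by linarith)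
            · apply mul_le_mul_of_nonneg_left _ (by positivity)
              rw [div_le_iff₀ hd2, hEM]
              nlinarith [Real.exp_pos (b/T), mul_pos hξ hM]
        _ ≤ (1/ξ) * (a * Real.exp (2*b/T)) * ((ε+b) * Real.exp (-((ε+b)/T)))
              + (a * Real.exp (b/T)) * (ε*φ) := by
            apply add_le_add
            · have h1 : m*(1/(ξ*M)) = (1/ξ)*(m*Real.exp (-(m/T))) := by
                rw [Real.exp_neg, hMdef]; field_simp
              have h2 : m * Real.exp (-(m/T)) ≤ Real.exp (2*b/T) * ((ε+b)*Real.exp (-((ε+b)/T))) := by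
                rw [hMexp]
                calc m * (Real.exp (2*b/T) * Real.exp (-((ε+b)/T)))
                    = (Real.exp (2*b/T) * Real.exp (-((ε+b)/T))) * m := by ring
                  _ ≤ (Real.exp (2*b/T) * Real.exp (-((ε+b)/T))) * (ε+b) := by
                      apply mul_le_mul_of_nonneg_left (by linarith) (by positivity)
                  _ = Real.exp (2*b/T) * ((ε+b)*Real.exp (-((ε+b)/T))) := by ring
              calc a*m*(1/(ξ*M)) = a*((1/ξ)*(m*Real.exp (-(m/T)))) := by rw [← h1]; ring
                _ ≤ a*((1/ξ)*(Real.exp (2*b/T) * ((ε+b)*Real.exp (-((ε+b)/T))))) := by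
                    apply mul_le_mul_of_nonneg_left _ ha
                    exact mul_le_mul_of_nonneg_left h2 (by positivity)
                _ = (1/ξ) * (a * Real.exp (2*b/T)) * ((ε+b) * Real.exp (-((ε+b)/T))) := by ring
            · nlinarith [mul_nonneg (mul_nonneg ha hφ0) (Real.exp_pos (b/T)).le]
  calc |lam T ε ξ a b φ|
      ≤ (a+1)*(ε+b) * (|1 - φ*(1+ξ*E)| / (1+ξ*B)) + a*m * (|1 - φ*(1+ξ*E)| / (1+ξ*M)) := hlam
    _ ≤ (a+1)*(ε+b) * ((1/ξ)*(1/B) + φ) +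
        ((1/ξ) * (a * Real.exp (2*b/T)) * ((ε+b) * Real.exp (-((ε+b)/T)))
          + (a * Real.exp (b/T)) * (ε*φ)) := by
        apply add_le_add _ key2
        exact mul_le_mul_of_nonneg_left key1 (by positivity)
    _ ≤ (1/ξ) * ((a+1) * (1 + Real.exp (2*b/T))) * ((ε+b) * Real.exp (-((ε+b)/T)))
        + ((a+1) * (1 + Real.exp (b/T))) * (ε*φ) + ((a+1)*b) * φ := by
        have hBinv : 1/B = Real.exp (-((ε+b)/T)) := by rw [Real.exp_neg, hBdef]; ring
        rw [hBinv]
        have hX : (0:ℝ) ≤ (ε+b)*Real.exp (-((ε+b)/T)) := by positivity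
        have he2 : (0:ℝ) < Real.exp (2*b/T) := Real.exp_pos _
        have heb : (0:ℝ) < Real.exp (b/T) := Real.exp_pos _
        have hεφ : (0:ℝ) ≤ ε*φ := by positivity
        nlinarith [mul_nonneg (mul_nonneg (by positivity : (0:ℝ) ≤ 1/ξ) hX) he2.le,
          mul_nonneg hεφ heb.le]

lemma decay_bound {T b hvF : ℝ} (hT : 0 < T) (hb : 0 ≤ b) (hv : 0 < hvF) :
    ∃ C : ℝ, 0 ≤ C ∧ ∀ x : ℝ, 0 ≤ x →
      (hvF*x + b) * Real.exp (-((hvF*x + b)/T)) ≤ C * (1 + x)^(-(3:ℝ)) := by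
  set c0 : ℝ := (1+hvF)/hvF with hc0def
  set c1 : ℝ := max 1 (4*T) with hc1def
  have hc0 : 0 < c0 := div_pos (by linarith) hv
  have hc1 : 0 < c1 := lt_of_lt_of_le one_pos (le_max_left _ _)
  refine ⟨c0^3 * c1^4, by positivity, fun x hx => ?_⟩
  set s : ℝ := hvF*x + b with hsdef
  have hs : 0 ≤ s := by positivity
  have hx1 : (0:ℝ) < 1 + x := by linarith
  have h4T : (0:ℝ) < 4*T := by linarith
  have h1 : 1 + x ≤ c0 * (1+s) := by
    rw [hc0def, div_mul_eq_mul_div, le_div_iff₀ hv]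
    nlinarith
  have h2 : 1 + s ≤ c1 * (1 + s/(4*T)) := by
    rcases max_cases 1 (4*T) with ⟨hc, hle⟩ | ⟨hc, hlt⟩ <;> rw [hc1def, hc]
    · rw [one_mul]
      have : s ≤ s/(4*T) := by rw [le_div_iff₀ h4T]; nlinarith
      linarith
    · rw [mul_add, mul_div_cancel₀ _ (ne_of_gt h4T)]; linarith
  have h3 : Real.exp (s/(4*T)) ^ (4:ℕ) = Real.exp (s/T) := by
    rw [← Real.exp_nat_mul]; congr 1; field_simp; ring
  have h4 : (1+s)^4 ≤ c1^4 * Real.exp (s/T) := by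
    calc (1+s)^4 ≤ (c1 * (1 + s/(4*T)))^4 :=
          pow_le_pow_left₀ (by linarith) h2 4
      _ = c1^4 * (1 + s/(4*T))^4 := by ring
      _ ≤ c1^4 * Real.exp (s/(4*T)) ^ (4:ℕ) := by
          apply mul_le_mul_of_nonneg_left _ (by positivity)
          exact pow_le_pow_left₀ (by positivity) (by linarith [Real.add_one_le_exp (s/(4*T))]) 4
      _ = c1^4 * Real.exp (s/T) := by rw [h3]
  have he : Real.exp (-(s/T)) * Real.exp (s/T) = 1 := by
    rw [← Real.exp_add]; simp
  have hrpow : (1 + x)^(-(3:ℝ)) = ((1+x)^(3:ℕ))⁻¹ := by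
    rw [← Real.rpow_natCast (1+x) 3, ← Real.rpow_neg hx1.le]; norm_num
  rw [hrpow, ← div_eq_mul_inv, le_div_iff₀ (by positivity)]
  have hx3 : (1+x)^(3:ℕ) ≤ c0^3 * (1+s)^3 := by
    rw [← mul_pow]; exact pow_le_pow_left₀ (by linarith) h1 3
  have hs4 : s*(1+s)^3 ≤ (1+s)^4 := by
    nlinarith [pow_nonneg (show (0:ℝ) ≤ 1+s by linarith) 3]
  calc s * Real.exp (-(s/T)) * (1+x)^(3:ℕ)
      ≤ s * Real.exp (-(s/T)) * (c0^3 * (1+s)^3) := by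
        apply mul_le_mul_of_nonneg_left hx3 (by positivity)
    _ = c0^3 * (s*(1+s)^3) * Real.exp (-(s/T)) := by ring
    _ ≤ c0^3 * (1+s)^4 * Real.exp (-(s/T)) := by
        apply mul_le_mul_of_nonneg_right (mul_le_mul_of_nonneg_left hs4 (by positivity))
          (Real.exp_nonneg _)
    _ ≤ c0^3 * (c1^4 * Real.exp (s/T)) * Real.exp (-(s/T)) := by
        apply mul_le_mul_of_nonneg_right (mul_le_mul_of_nonneg_left h4 (by positivity))
          (Real.exp_nonneg _)
    _ = c0^3*c1^4 * (Real.exp (-(s/T)) * Real.exp (s/T)) := by ring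
    _ = c0^3*c1^4 := by rw [he]; ring

open MeasureTheory in
lemma lam_integrable (kBT hvF : ℝ) (hkBT : 0 < kBT) (hhvF : 0 < hvF)
    (a b : ℝ) (ha : 0 ≤ a) (hb : 0 ≤ b)
    (f : EuclideanSpace ℝ (Fin 2) → ℝ) (hfmeas : Measurable f)
    (hf01 : ∀ k, 0 ≤ f k ∧ f k ≤ 1)
    (hint : Integrable (fun k => hvF * ‖k‖ * f k) volume)
    (ξ : ℝ) (hξ : 0 < ξ) :
    Integrable (fun k => lam kBT (hvF * ‖k‖) ξ a b (f k)) volume := by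
  have hf_int : Integrable f volume := by
    have hind : Integrable
        ((Metric.ball (0 : EuclideanSpace ℝ (Fin 2)) 1).indicator (fun _ => (1:ℝ))) volume :=
      (integrableOn_const measure_ball_lt_top.ne).integrable_indicator
        measurableSet_ball
    have hg : Integrable (fun k : EuclideanSpace ℝ (Fin 2) =>
        (1/hvF) * (hvF * ‖k‖ * f k) +
          (Metric.ball (0 : EuclideanSpace ℝ (Fin 2)) 1).indicator (fun _ => (1:ℝ)) k) volume :=
      (hint.const_mul _).add hind
    refine hg.mono hfmeas.aestronglyMeasurable (Filter.Eventually.of_forall fun k => ?_)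
    obtain ⟨h0, h1⟩ := hf01 k
    have hnn : (0:ℝ) ≤ ‖k‖ := norm_nonneg k
    rw [Real.norm_eq_abs, Real.norm_eq_abs, abs_of_nonneg h0]
    by_cases hk : k ∈ Metric.ball (0 : EuclideanSpace ℝ (Fin 2)) 1
    · rw [Set.indicator_of_mem hk]
      have : (0:ℝ) ≤ (1/hvF) * (hvF * ‖k‖ * f k) := by positivity
      rw [abs_of_nonneg (by linarith)]; linarith
    · rw [Set.indicator_of_notMem hk]
      have hk1 : (1:ℝ) ≤ ‖k‖ := by
        by_contra h; push_neg at h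
        exact hk (by simpa [Metric.mem_ball, dist_zero_right] using h)
      have heq : (1/hvF) * (hvF * ‖k‖ * f k) = ‖k‖ * f k := by field_simp
      rw [add_zero, heq, abs_of_nonneg (by positivity)]
      nlinarith
  have hJB : Integrable (fun k : EuclideanSpace ℝ (Fin 2) => (1+‖k‖)^(-(3:ℝ))) volume :=
    integrable_one_add_norm (by norm_num [finrank_euclideanSpace_fin])
  obtain ⟨C, hC0, hC⟩ := decay_bound hkBT hb hhvF
  have hG : Integrable (fun k : EuclideanSpace ℝ (Fin 2) =>
      (1/ξ) * ((a+1) * (1 + Real.exp (2*b/kBT))) * (C * (1+‖k‖)^(-(3:ℝ)))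
        + (((a+1) * (1 + Real.exp (b/kBT))) * (hvF * ‖k‖ * f k)
          + ((a+1)*b) * f k)) volume :=
    ((hJB.const_mul C).const_mul _).add ((hint.const_mul _).add (hf_int.const_mul _))
  have hmeas : Measurable (fun k : EuclideanSpace ℝ (Fin 2) =>
      lam kBT (hvF * ‖k‖) ξ a b (f k)) := by
    unfold lam psi; fun_prop
  refine hG.mono hmeas.aestronglyMeasurable (Filter.Eventually.of_forall fun k => ?_)
  obtain ⟨h0, h1⟩ := hf01 k
  have hε : (0:ℝ) ≤ hvF * ‖k‖ := by positivity
  have step1 := lam_bound (ε := hvF * ‖k‖) (φ := f k) hkBT hξ ha hb hε h0 h1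
  have step2 : (1/ξ) * ((a+1) * (1 + Real.exp (2*b/kBT))) *
      ((hvF * ‖k‖ + b) * Real.exp (-((hvF * ‖k‖ + b)/kBT))) ≤
      (1/ξ) * ((a+1) * (1 + Real.exp (2*b/kBT))) * (C * (1+‖k‖)^(-(3:ℝ))) :=
    mul_le_mul_of_nonneg_left (hC ‖k‖ (norm_nonneg k)) (by positivity)
  rw [Real.norm_eq_abs]
  refine le_trans ?_ (le_abs_self _)
  linarith [step1, step2]

/-- **Strict monotonicity of the collision integral in `μ`.** With `ε(k) = ħv_F·|k|`,
for `f : ℝ² → ℝ` measurable with values in `[0,1]`, not almost everywhere `0`, and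
with `k ↦ ε(k)·f(k)` integrable, the map
`μ ↦ ∫_{ℝ²} λ(ε(k), exp(−μ/k_BT); a, b; f(k)) dk` is strictly increasing on `ℝ`. -/
theorem lam_integral_strictMono
    (kBT hvF : ℝ) (hkBT : 0 < kBT) (hhvF : 0 < hvF)
    (a b : ℝ) (ha : 0 ≤ a) (hb : 0 ≤ b)
    (f : EuclideanSpace ℝ (Fin 2) → ℝ) (hfmeas : Measurable f)
    (hf01 : ∀ k, 0 ≤ f k ∧ f k ≤ 1)
    (hfne : ¬ (f =ᵐ[volume] 0))
    (hint : Integrable (fun k => hvF * ‖k‖ * f k) volume) :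
    StrictMono (fun μ => ∫ k : EuclideanSpace ℝ (Fin 2),
      lam kBT (hvF * ‖k‖) (Real.exp (-μ / kBT)) a b (f k)) := by
  intro μ₁ μ₂ hμ
  dsimp only
  set ξ₁ := Real.exp (-μ₁ / kBT) with hξ1def
  set ξ₂ := Real.exp (-μ₂ / kBT) with hξ2def
  have hξ2 : 0 < ξ₂ := Real.exp_pos _
  have hξlt : ξ₂ < ξ₁ := Real.exp_lt_exp.mpr ((div_lt_div_iff_of_pos_right hkBT).mpr (by linarith))
  have I₁ := lam_integrable kBT hvF hkBT hhvF a b ha hb f hfmeas hf01 hint ξ₁ (hξ2.trans hξlt)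
  have I₂ := lam_integrable kBT hvF hkBT hhvF a b ha hb f hfmeas hf01 hint ξ₂ hξ2
  have hgint : Integrable (fun k : EuclideanSpace ℝ (Fin 2) =>
      lam kBT (hvF * ‖k‖) ξ₂ a b (f k) - lam kBT (hvF * ‖k‖) ξ₁ a b (f k)) volume := I₂.sub I₁
  have hgnn : ∀ k : EuclideanSpace ℝ (Fin 2),
      0 ≤ lam kBT (hvF * ‖k‖) ξ₂ a b (f k) - lam kBT (hvF * ‖k‖) ξ₁ a b (f k) := fun k =>
    sub_nonneg.mpr (lam_le hkBT ha (by positivity) hb (hf01 k).1 (hf01 k).2 hξ2 hξlt.le)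
  have hpos : 0 < ∫ k : EuclideanSpace ℝ (Fin 2),
      (lam kBT (hvF * ‖k‖) ξ₂ a b (f k) - lam kBT (hvF * ‖k‖) ξ₁ a b (f k)) := by
    rw [integral_pos_iff_support_of_nonneg hgnn hgint]
    have hsub : Metric.ball (0 : EuclideanSpace ℝ (Fin 2)) 1 \ {0} ⊆
        Function.support (fun k : EuclideanSpace ℝ (Fin 2) =>
          lam kBT (hvF * ‖k‖) ξ₂ a b (f k) - lam kBT (hvF * ‖k‖) ξ₁ a b (f k)) := by
      intro k hk
      have hk0 : k ≠ 0 := by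
        intro h; exact hk.2 (by simp [h])
      have hknorm : 0 < ‖k‖ := norm_pos_iff.mpr hk0
      have hεb : 0 < hvF * ‖k‖ + b :=
        add_pos_of_pos_of_nonneg (mul_pos hhvF hknorm) hb
      have := lam_lt hkBT ha hεb (by positivity) hb (hf01 k).1 (hf01 k).2 hξ2 hξlt
      exact ne_of_gt (sub_pos.mpr this)
    calc (0:ENNReal) < volume (Metric.ball (0 : EuclideanSpace ℝ (Fin 2)) 1 \ {0}) := by
          rw [measure_diff_null (measure_singleton 0)]
          exact Metric.measure_ball_pos volume 0 one_pos
      _ ≤ _ := measure_mono hsub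
  rw [integral_sub I₂ I₁] at hpos
  linarith
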